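/- arXiv:1408.4693 — 4 statements merged into one kernel-verified Lean document; each statement's English description precedes it below -/
import Mathlib

section
/- Let 𝔤 be a finite-dimensional real Lie algebra, θ a Lie algebra automorphism of 𝔤 with θ ∘ θ = id, and H ∈ 𝔤 with θ(H) = -H. Let 𝔫(H) denote the sum of the eigenspaces of ad H with strictly positive eigenvalues. If X ∈ 𝔫(H) satisfies X + θ(X) = 0, then X = 0. (The map X ↦ X + θX is a linear monomorphism from 𝔫(H) into the +1-eigenspace 𝔨 of θ.) -/
open DFinsupp in
lemma aux_disjoint_biSup {ι R N : Type*} [DecidableEq ι] [Ring R] [AddCommGroup N] [Module R N]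
    {p : ι → Submodule R N} (hp : iSupIndep p) (s u : Set ι)
    [DecidablePred (· ∈ s)] [DecidablePred (· ∈ u)]
    (hsu : ∀ i, i ∈ s → i ∉ u) :
    Disjoint (⨆ i ∈ s, p i) (⨆ i ∈ u, p i) := by
  rw [Submodule.disjoint_def]
  intro x hxs hxu
  rw [Submodule.mem_biSup_iff_exists_dfinsupp (· ∈ s) p x] at hxs
  rw [Submodule.mem_biSup_iff_exists_dfinsupp (· ∈ u) p x] at hxu
  obtain ⟨f, hf⟩ := hxs
  obtain ⟨g, hg⟩ := hxu
  set L := DFinsupp.lsum ℕ (M := fun i ↦ ↥(p i)) (fun i => (p i).subtype) with hL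
  have hinj : Function.Injective L := hp.dfinsupp_lsum_injective
  have h0 : L (f.filter (· ∈ s) - g.filter (· ∈ u)) = 0 := by
    rw [map_sub, hf, hg, sub_self]
  have heq : f.filter (· ∈ s) = g.filter (· ∈ u) := by
    have := hinj (by rw [h0, map_zero] : L (f.filter (· ∈ s) - g.filter (· ∈ u)) = L 0)
    exact sub_eq_zero.mp this
  have hzero : f.filter (· ∈ s) = 0 := by
    ext i
    by_cases hi : i ∈ s
    · have := DFunLike.congr_fun heq i
      rw [DFinsupp.filter_apply_pos f hi, DFinsupp.filter_apply_neg g (hsu i hi)] at this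
      simp [DFinsupp.filter_apply_pos f hi, this]
    · simp [DFinsupp.filter_apply_neg f hi]
  rw [← hf, hzero, map_zero]

/-- Let `θ` be an involutive Lie algebra automorphism with `θ H = -H` and let
`𝔫(H)` be the sum of the eigenspaces of `ad H` with positive eigenvalues.
If `X ∈ 𝔫(H)` and `X + θ X = 0` then `X = 0`: the map `X ↦ X + θX` is injective
on `𝔫(H)`. -/
theorem eq_zero_of_mem_nH_add_theta_eq_zero
    {𝔤 : Type*} [LieRing 𝔤] [LieAlgebra ℝ 𝔤] [FiniteDimensional ℝ 𝔤]
    (θ : 𝔤 →ₗ⁅ℝ⁆ 𝔤) (hinv : ∀ Z : 𝔤, θ (θ Z) = Z)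
    (H : 𝔤) (hH : θ H = -H) (X : 𝔤)
    (hX : X ∈ ⨆ lam > (0 : ℝ), Module.End.eigenspace (LieAlgebra.ad ℝ 𝔤 H) lam)
    (h : X + θ X = 0) :
    X = 0 := by
  classical
  set E : ℝ → Submodule ℝ 𝔤 := fun lam => Module.End.eigenspace (LieAlgebra.ad ℝ 𝔤 H) lam with hE
  have hindep : iSupIndep E := (LieAlgebra.ad ℝ 𝔤 H).eigenspaces_iSupIndep
  -- θ maps E λ into E (-λ)
  have hmap : ∀ lam : ℝ, ∀ Y ∈ E lam, θ Y ∈ E (-lam) := by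
    intro lam Y hY
    rw [hE, Module.End.mem_eigenspace_iff] at hY ⊢
    have : ⁅H, θ Y⁆ = θ ⁅θ H, Y⁆ := by rw [LieHom.map_lie, hinv]
    rw [LieAlgebra.ad_apply] at hY ⊢
    rw [this, hH, neg_lie, hY, map_neg, map_smul, neg_smul]
  -- X ∈ N := ⨆ λ < 0
  have hXneg : X ∈ ⨆ lam < (0 : ℝ), E lam := by
    have hθX : θ X ∈ ⨆ lam < (0 : ℝ), E lam := by
      have hXP : X ∈ ⨆ lam > (0 : ℝ), E lam := hX
      have : (⨆ lam > (0 : ℝ), E lam).map θ.toLinearMap ≤ ⨆ lam < (0 : ℝ), E lam := by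
        rw [Submodule.map_iSup]
        refine iSup_le fun lam => ?_
        rw [Submodule.map_iSup]
        refine iSup_le fun hlam => ?_
        refine le_trans ?_ (le_biSup E (neg_neg_iff_pos.mpr hlam : -lam < 0))
        intro y hy
        obtain ⟨z, hz, rfl⟩ := hy
        exact hmap lam z hz
      exact this ⟨X, hXP, rfl⟩
    have hXeq : X = -θ X := eq_neg_of_add_eq_zero_left h
    rw [hXeq]
    exact neg_mem hθX
  have hdisj : Disjoint (⨆ lam > (0 : ℝ), E lam) (⨆ lam < (0 : ℝ), E lam) := by
    have := aux_disjoint_biSup hindep (Set.Ioi 0) (Set.Iio 0)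
      (fun i hi hi' => absurd (lt_trans (Set.mem_Iio.mp hi') (Set.mem_Ioi.mp hi)) (lt_irrefl _))
    simpa [Set.mem_Ioi, Set.mem_Iio] using this
  exact Submodule.disjoint_def.mp hdisj X hX hXneg
end

section
/- Let 𝔤 be a finite-dimensional real Lie algebra, θ a Lie algebra automorphism of 𝔤 with θ ∘ θ = id, and H ∈ 𝔤 with θ(H) = -H. Let 𝔫(H) denote the sum of the eigenspaces of ad H with strictly positive eigenvalues. If X ∈ 𝔫(H) satisfies ⁅H, X + θ(X)⁆ = 0, then X = 0. (The image of 𝔫(H) under X ↦ X + θX has trivial intersection with the centralizer 𝔷_𝔨(H).) -/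
lemma aux_disjoint_biSup_biSup {ι N : Type*} [DecidableEq ι] [AddCommGroup N] [Module ℝ N]
    (p : ι → Submodule ℝ N) (hp : iSupIndep p) (S T : ι → Prop)
    [DecidablePred S] [DecidablePred T] (hST : ∀ i, S i → T i → False) :
    Disjoint (⨆ i, ⨆ _ : S i, p i) (⨆ i, ⨆ _ : T i, p i) := by
  rw [Submodule.disjoint_def]
  intro x hxS hxT
  rw [Submodule.mem_biSup_iff_exists_dfinsupp] at hxS hxT
  obtain ⟨f, hf⟩ := hxS
  obtain ⟨g, hg⟩ := hxT
  have key : f.filter S = g.filter T := hp.dfinsupp_lsum_injective (hf.trans hg.symm)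
  have h0 : f.filter S = 0 := by
    ext i
    by_cases hS : S i
    · have hT : ¬ T i := fun h => hST i hS h
      have := congrArg (fun k => k i) key
      simpa [DFinsupp.filter_apply, hS, hT] using this
    · simp [DFinsupp.filter_apply, hS]
  rw [h0] at hf
  simpa using hf.symm

/-- Let `θ` be an involutive Lie algebra automorphism with `θ H = -H` and let
`𝔫(H)` be the sum of the eigenspaces of `ad H` with positive eigenvalues.
If `X ∈ 𝔫(H)` and `⁅H, X + θ X⁆ = 0` then `X = 0`: the image of `𝔫(H)` under
`X ↦ X + θX` meets the centralizer `𝔷_𝔨(H)` trivially. -/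
theorem eq_zero_of_mem_nH_lie_add_theta_eq_zero
    {𝔤 : Type*} [LieRing 𝔤] [LieAlgebra ℝ 𝔤] [FiniteDimensional ℝ 𝔤]
    (θ : 𝔤 →ₗ⁅ℝ⁆ 𝔤) (hinv : ∀ Z : 𝔤, θ (θ Z) = Z)
    (H : 𝔤) (hH : θ H = -H) (X : 𝔤)
    (hX : X ∈ ⨆ lam > (0 : ℝ), Module.End.eigenspace (LieAlgebra.ad ℝ 𝔤 H) lam)
    (h : ⁅H, X + θ X⁆ = 0) :
    X = 0 := by
  classical
  set f := LieAlgebra.ad ℝ 𝔤 H with hf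
  set E := fun lam : ℝ => Module.End.eigenspace f lam with hE
  have hindep : iSupIndep E := Module.End.eigenspaces_iSupIndep f
  have hanti : ∀ y : 𝔤, ⁅H, θ y⁆ = -θ ⁅H, y⁆ := by
    intro y
    have h1 : θ ⁅H, y⁆ = ⁅θ H, θ y⁆ := θ.map_lie H y
    rw [hH, neg_lie] at h1
    rw [h1, neg_neg]
  have hmap : ∀ (lam : ℝ) (y : 𝔤), y ∈ E lam → θ y ∈ E (-lam) := by
    intro lam y hy
    rw [hE, Module.End.mem_eigenspace_iff] at hy ⊢
    have h2 : f (θ y) = -θ (f y) := hanti y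
    rw [h2, hy, map_smul, neg_smul]
  have hfE : ∀ (lam : ℝ) (y : 𝔤), y ∈ E lam → f y ∈ E lam := by
    intro lam y hy
    rw [hE, Module.End.mem_eigenspace_iff] at hy ⊢
    rw [hy, LinearMap.map_smul, hy]
  set P := ⨆ lam, ⨆ _ : (0:ℝ) < lam, E lam with hP
  set Nn := ⨆ lam, ⨆ _ : lam < (0:ℝ), E lam with hN
  have hXP : X ∈ P := hX
  have hfP : ∀ y ∈ P, f y ∈ P := by
    intro y hy
    have : P ≤ Submodule.comap f P := by
      rw [hP]
      refine iSup₂_le fun lam hlam => ?_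
      intro z hz
      exact Submodule.mem_comap.mpr (Submodule.mem_iSup_of_mem lam
        (Submodule.mem_iSup_of_mem hlam (hfE lam z hz)))
    exact this hy
  have hθPN : ∀ y ∈ P, θ y ∈ Nn := by
    intro y hy
    have : P ≤ Submodule.comap (θ : 𝔤 →ₗ[ℝ] 𝔤) Nn := by
      rw [hP]
      refine iSup₂_le fun lam hlam => ?_
      intro z hz
      refine Submodule.mem_comap.mpr ?_
      exact Submodule.mem_iSup_of_mem (-lam)
        (Submodule.mem_iSup_of_mem (by linarith) (hmap lam z hz))
    exact this hy
  -- key computation: f X = θ (f X)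
  have hfix : f X = θ (f X) := by
    have : f X + f (θ X) = 0 := by
      have := h
      simpa [hf, LieAlgebra.ad_apply, lie_add] using this
    have h3 : f (θ X) = -θ (f X) := hanti X
    rw [h3, ← sub_eq_add_neg] at this
    exact sub_eq_zero.mp this
  have hfXP : f X ∈ P := hfP X hXP
  have hfXN : f X ∈ Nn := hfix ▸ hθPN (f X) hfXP
  have hdisj : Disjoint P Nn :=
    aux_disjoint_biSup_biSup E hindep (fun lam => (0:ℝ) < lam) (fun lam => lam < (0:ℝ))
      (fun i h1 h2 => absurd h2 (not_lt.mpr h1.le))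
  have hfX0 : f X = 0 := Submodule.disjoint_def.mp hdisj _ hfXP hfXN
  -- X ∈ eigenspace 0, and disjoint from P
  have hX0 : X ∈ E 0 := by
    rw [hE, Module.End.mem_eigenspace_iff, hfX0, zero_smul]
  have hd0 : Disjoint (E 0) P := hindep.disjoint_biSup (x := (0:ℝ))
    (y := {lam | 0 < lam}) (by simp)
  exact Submodule.disjoint_def.mp hd0 X hX0 hXP
end

section
/- Let 𝔤 be a finite-dimensional real Lie algebra with Killing form κ, and let θ be a Cartan involution of 𝔤, i.e., a Lie algebra automorphism with θ ∘ θ = id such that the bilinear form B(X,Y) = -κ(X, θ(Y)) is positive definite. Let H ∈ 𝔤 with θ(H) = -H, and let 𝔫(H) be the sum of the eigenspaces of ad H with strictly positive eigenvalues. Then for every nonzero X ∈ 𝔫(H) there exists Y ∈ 𝔤 with θ(Y) = Y and κ(X,Y) ≠ 0. (The Killing-form pairing between 𝔫(H) and 𝔨 is nondegenerate in the first variable.) -/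
/-- Let `θ` be a Cartan involution (an involutive Lie algebra automorphism such
that `B(X,Y) = -κ(X, θ Y)` is positive definite), let `θ H = -H`, and let `𝔫(H)`
be the sum of the eigenspaces of `ad H` with positive eigenvalues. Then every
nonzero `X ∈ 𝔫(H)` pairs nontrivially under the Killing form with some
`θ`-fixed vector `Y`. -/
theorem exists_fixed_killing_pairing_ne_zero
    {𝔤 : Type*} [LieRing 𝔤] [LieAlgebra ℝ 𝔤] [FiniteDimensional ℝ 𝔤]
    (θ : 𝔤 →ₗ⁅ℝ⁆ 𝔤) (hinv : ∀ Z : 𝔤, θ (θ Z) = Z)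
    (hpos : ∀ X : 𝔤, X ≠ 0 → 0 < -(killingForm ℝ 𝔤 X (θ X)))
    (H : 𝔤) (hH : θ H = -H) (X : 𝔤)
    (hX : X ∈ ⨆ lam > (0 : ℝ), Module.End.eigenspace (LieAlgebra.ad ℝ 𝔤 H) lam)
    (hX0 : X ≠ 0) :
    ∃ Y : 𝔤, θ Y = Y ∧ killingForm ℝ 𝔤 X Y ≠ 0 := by
  set κ := killingForm ℝ 𝔤
  set N := ⨆ lam > (0 : ℝ), Module.End.eigenspace (LieAlgebra.ad ℝ 𝔤 H) lam
  -- Step 1: κ vanishes on N × N.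
  have keyE : ∀ lam mu : ℝ, 0 < lam → 0 < mu →
      ∀ A ∈ Module.End.eigenspace (LieAlgebra.ad ℝ 𝔤 H) lam,
      ∀ B ∈ Module.End.eigenspace (LieAlgebra.ad ℝ 𝔤 H) mu, κ A B = 0 := by
    intro lam mu hlam hmu A hA B hB
    have hA' : ⁅H, A⁆ = lam • A := by
      have := hA
      rwa [Module.End.mem_eigenspace_iff] at this
    have hB' : ⁅H, B⁆ = mu • B := by
      have := hB
      rwa [Module.End.mem_eigenspace_iff] at this
    have h1 : κ ⁅H, A⁆ B = - κ A ⁅H, B⁆ :=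
      LieModule.traceForm_apply_lie_apply' ℝ 𝔤 𝔤 H A B
    rw [hA', hB'] at h1
    simp only [map_smul, LinearMap.smul_apply, smul_eq_mul] at h1
    have : (lam + mu) * κ A B = 0 := by ring_nf; linarith [h1]
    have hlm : lam + mu ≠ 0 := by positivity
    exact (mul_eq_zero.mp this).resolve_left hlm |>.symm ▸ rfl
  have keyN : ∀ A ∈ N, ∀ B ∈ N, κ A B = 0 := by
    intro A hA
    induction hA using Submodule.iSup_induction' with
    | mem lam A hA =>
      by_cases hlam : 0 < lam
      · rw [iSup_pos hlam] at hA
        intro B hB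
        induction hB using Submodule.iSup_induction' with
        | mem mu B hB =>
          by_cases hmu : 0 < mu
          · rw [iSup_pos hmu] at hB
            exact keyE lam mu hlam hmu A hA B hB
          · rw [iSup_neg hmu] at hB
            simp_all
        | zero => simp
        | add B C _ _ hB hC => simp [hB, hC]
      · rw [iSup_neg hlam] at hA
        simp_all
    | zero => simp
    | add A B _ _ hA hB => intro C hC; simp [map_add, hA C hC, hB C hC]
  -- Step 2: take Y = X + θ X.
  refine ⟨X + θ X, ?_, ?_⟩
  · rw [map_add θ, hinv, add_comm]
  · have h1 : κ X X = 0 := keyN X hX X hX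
    have h2 : κ X (θ X) ≠ 0 := by
      have := hpos X hX0
      intro h; rw [h] at this; simp at this
    rw [map_add]
    simpa [h1] using h2
end

section
/- Let 𝔤 be a finite-dimensional real Lie algebra whose Killing form κ is nondegenerate, let θ be a Lie algebra automorphism of 𝔤 with θ ∘ θ = id, and let H ∈ 𝔤 be real hyperbolic (the eigenspaces of ad H span 𝔤) with θ(H) = -H. Let 𝔫(H) be the sum of the eigenspaces of ad H with strictly positive eigenvalues. If Y ∈ 𝔤 satisfies θ(Y) = Y and κ(X,Y) = 0 for all X ∈ 𝔫(H), then ⁅H,Y⁆ = 0. (Hence the Killing-form pairing 𝔫(H) × 𝔨/𝔷_𝔨(H) → ℝ is nondegenerate in the second variable.) -/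
/-- Let `𝔤` have nondegenerate Killing form, let `θ` be an involutive Lie
algebra automorphism, and let `H` be real hyperbolic with `θ H = -H`. If a
`θ`-fixed vector `Y` is Killing-orthogonal to all of `𝔫(H)`, the sum of the
positive eigenspaces of `ad H`, then `⁅H, Y⁆ = 0`. -/
theorem lie_eq_zero_of_fixed_orthogonal_nH
    {𝔤 : Type*} [LieRing 𝔤] [LieAlgebra ℝ 𝔤] [FiniteDimensional ℝ 𝔤]
    (hnd : (killingForm ℝ 𝔤).Nondegenerate)
    (θ : 𝔤 →ₗ⁅ℝ⁆ 𝔤) (hinv : ∀ Z : 𝔤, θ (θ Z) = Z)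
    (H : 𝔤)
    (hhyp : (⨆ lam : ℝ, Module.End.eigenspace (LieAlgebra.ad ℝ 𝔤 H) lam) = ⊤)
    (hH : θ H = -H) (Y : 𝔤) (hY : θ Y = Y)
    (horth : ∀ X ∈ ⨆ lam > (0 : ℝ), Module.End.eigenspace (LieAlgebra.ad ℝ 𝔤 H) lam,
      killingForm ℝ 𝔤 X Y = 0) :
    ⁅H, Y⁆ = 0 := by
  -- θ as a Lie algebra equivalence
  let e : 𝔤 ≃ₗ⁅ℝ⁆ 𝔤 := { θ with invFun := θ, left_inv := hinv, right_inv := hinv }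
  have hκθ : ∀ a b : 𝔤, killingForm ℝ 𝔤 (θ a) (θ b) = killingForm ℝ 𝔤 a b := by
    intro a b
    exact LieAlgebra.killingForm_of_equiv_apply e a b
  -- Y is orthogonal to every eigenvector of ad H with nonzero eigenvalue
  have key : ∀ (lam : ℝ), lam ≠ 0 → ∀ Z ∈ Module.End.eigenspace (LieAlgebra.ad ℝ 𝔤 H) lam,
      killingForm ℝ 𝔤 Z Y = 0 := by
    intro lam hlam Z hZ
    rcases hlam.lt_or_gt with hneg | hpos
    · -- θ Z is an eigenvector for -lam > 0
      have hZ' : ⁅H, Z⁆ = lam • Z := by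
        have := hZ
        rw [Module.End.mem_eigenspace_iff] at this
        simpa [LieAlgebra.ad_apply] using this
      have hθZ : θ Z ∈ Module.End.eigenspace (LieAlgebra.ad ℝ 𝔤 H) (-lam) := by
        rw [Module.End.mem_eigenspace_iff]
        have : ⁅H, θ Z⁆ = (-lam) • θ Z := by
          have h1 : θ ⁅H, Z⁆ = ⁅θ H, θ Z⁆ := θ.map_lie H Z
          rw [hZ', hH] at h1
          have h2 : ⁅-H, θ Z⁆ = -⁅H, θ Z⁆ := by simp
          have h3 : θ (lam • Z) = lam • θ Z := θ.map_smul lam Z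
          rw [h3, h2] at h1
          rw [neg_smul]
          exact neg_eq_iff_eq_neg.mp h1.symm
        simpa [LieAlgebra.ad_apply] using this
      have hmem : θ Z ∈ ⨆ lam > (0 : ℝ), Module.End.eigenspace (LieAlgebra.ad ℝ 𝔤 H) lam :=
        le_iSup₂ (f := fun (lam : ℝ) (_ : lam > 0) =>
            Module.End.eigenspace (LieAlgebra.ad ℝ 𝔤 H) lam) (-lam) (by linarith) hθZ
      have := horth (θ Z) hmem
      rw [← hY, hκθ] at this
      exact this
    · exact horth Z (le_iSup₂ (f := fun (lam : ℝ) (_ : lam > 0) =>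
        Module.End.eigenspace (LieAlgebra.ad ℝ 𝔤 H) lam) lam hpos hZ)
  -- hence ⁅H, Y⁆ is Killing-orthogonal to everything
  have main : ∀ Z : 𝔤, killingForm ℝ 𝔤 Z ⁅H, Y⁆ = 0 := by
    intro Z
    have hZtop : Z ∈ (⨆ lam : ℝ, Module.End.eigenspace (LieAlgebra.ad ℝ 𝔤 H) lam) := by
      rw [hhyp]; trivial
    induction hZtop using Submodule.iSup_induction' with
    | mem lam Z hZ =>
        have hZ' : ⁅H, Z⁆ = lam • Z := by
          have := hZ
          rw [Module.End.mem_eigenspace_iff] at this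
          simpa [LieAlgebra.ad_apply] using this
        have h1 : killingForm ℝ 𝔤 Z ⁅H, Y⁆ = - killingForm ℝ 𝔤 ⁅H, Z⁆ Y := by
          rw [LieModule.traceForm_apply_lie_apply' ℝ 𝔤 𝔤 H Z Y, neg_neg]
        rw [h1, hZ']
        rcases eq_or_ne lam 0 with h0 | h0
        · simp [h0]
        · have := key lam h0 Z hZ
          simp [this]
    | zero => simp
    | add x y _ _ hx hy => rw [map_add, LinearMap.add_apply, hx, hy, add_zero]
  have symm : ∀ Z : 𝔤, killingForm ℝ 𝔤 ⁅H, Y⁆ Z = 0 := fun Z => by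
    rw [LieModule.traceForm_comm]; exact main Z
  exact hnd.1 ⁅H, Y⁆ symm
end
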